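/- There is an indexed family 𝓒𝓢𝓓 (the column self-describing sets) that is PRT[O]-learnable but not PRT[T]-learnable. Concretely, with a_n = n + 1 + Σ_{i<n} p_i(a_i) (where p_i is the polynomial with code i), A_n = [0,a_n]⊗{p_n(a_n)} ∪ ⋃_{i<p_n(a_n)} [0,a_n+i]⊗{i}, and B_{n,i} = ⋃_{j≤i} [0,a_n+j]⊗{j} for i < p_n(a_n), the family 𝓒𝓢𝓓 defined by F_{a_i} = A_i and F_{a_i+j} = B_{i,j} for 0 < j < p_i(a_i) is PRT[O]-learnable but not PRT[T]-learnable. -/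

import Mathlib

/-!
Common framework: indexed families of c.e. sets, enumerations (texts),
learning machines with run-time, membership-oracle machines, teachers,
and the learning criteria PRT/PSD/PMC/PCS with oracle/teacher variants.
-/

namespace TeachLearn

attribute [local instance] Classical.propDecidable

/-- The initial segment (finite string) of length `n` of the infinite sequence `f`. -/
def str (f : ℕ → ℕ) (n : ℕ) : List ℕ := (List.range n).map f

/-- `f` is an enumeration (a text) of the set `A`: its set of values is exactly `A`. -/
def IsEnum (f : ℕ → ℕ) (A : Set ℕ) : Prop := Set.range f = A

/-- An indexed family: a uniformly computably enumerable sequence of nonempty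
subsets of `ℕ`. -/
structure IndexedFamily where
  F : ℕ → Set ℕ
  nonempty : ∀ n, (F n).Nonempty
  uce : REPred fun p : ℕ × ℕ => p.1 ∈ F p.2

namespace IndexedFamily

/-- `A` is a member of the indexed family `𝓕`. -/
def Mem (𝓕 : IndexedFamily) (A : Set ℕ) : Prop := ∃ n, 𝓕.F n = A

/-- The minimal index of `A` in the indexed family `𝓕`. -/
noncomputable def mi (𝓕 : IndexedFamily) (A : Set ℕ) : ℕ := sInf {n | 𝓕.F n = A}

end IndexedFamily

/-- A learning machine: a partial computable map from finite strings to
hypotheses, together with a (cumulative) run-time function.  The run-time is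
defined exactly when the machine halts, dominates the length of the input read
as well as the size of the output produced, and is monotone along prefixes
(time is accumulated while reading an enumeration). -/
structure Machine where
  eval : List ℕ →. ℕ
  partrec : Partrec eval
  time : List ℕ →. ℕ
  time_dom : ∀ σ, (time σ).Dom ↔ (eval σ).Dom
  length_le_time : ∀ ⦃σ t⦄, t ∈ time σ → σ.length ≤ t
  size_le_time : ∀ ⦃σ t h⦄, t ∈ time σ → h ∈ eval σ → Nat.size h ≤ t
  time_mono : ∀ ⦃σ τ s t⦄, σ <+: τ → s ∈ time σ → t ∈ time τ → s ≤ t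

/-- A teacher: a computable, prefix-monotone map on finite strings whose
output consists of elements of its input. -/
structure Teacher where
  t : List ℕ → List ℕ
  computable : Computable t
  mono : ∀ ⦃σ τ⦄, σ <+: τ → t σ <+: t τ
  content_sub : ∀ ⦃σ x⦄, x ∈ t σ → x ∈ σ

/-- A learning machine with access to a membership oracle, modeled
interactively: `step (σ, ans)` is the machine's action on input string `σ`
after having received the list `ans` of oracle answers so far; an even value
`2 * q` asks the oracle whether `q` belongs to the target, while an odd value
`2 * h + 1` halts the interaction with hypothesis `h`.  The run-time dominates
the length of the input read, the number of oracle queries asked, and the size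
of the value produced, and is monotone (cumulative). -/
structure OMachine where
  step : List ℕ × List Bool →. ℕ
  partrec : Partrec step
  time : List ℕ × List Bool →. ℕ
  time_dom : ∀ x, (time x).Dom ↔ (step x).Dom
  length_le_time : ∀ ⦃x t⦄, t ∈ time x → x.1.length ≤ t
  queries_le_time : ∀ ⦃x t⦄, t ∈ time x → x.2.length ≤ t
  size_le_time : ∀ ⦃x t v⦄, t ∈ time x → v ∈ step x → Nat.size v ≤ t
  time_mono : ∀ ⦃σ τ a b s t⦄, σ <+: τ → a <+: b →
    s ∈ time (σ, a) → t ∈ time (τ, b) → s ≤ t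

namespace OMachine

/-- The answer lists reachable in the interaction of the machine `M` with the
membership oracle for `A` on the input string `σ`. -/
inductive Reach (M : OMachine) (A : Set ℕ) (σ : List ℕ) : List Bool → Prop
  | nil : Reach M A σ []
  | query {ans q} : Reach M A σ ans → (2 * q) ∈ M.step (σ, ans) →
      Reach M A σ (ans ++ [decide (q ∈ A)])

/-- `M.Out A σ h ans`: on input `σ`, interacting with the membership oracle
for `A`, the machine `M` receives the oracle answers `ans` and halts with
hypothesis `h`. -/
def Out (M : OMachine) (A : Set ℕ) (σ : List ℕ) (h : ℕ) (ans : List Bool) : Prop :=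
  M.Reach A σ ans ∧ (2 * h + 1) ∈ M.step (σ, ans)

/-- With oracle `A`, on the stage inputs `I`, the machine `M` outputs the
hypothesis `h` from stage `n` onwards. -/
def Settles (M : OMachine) (A : Set ℕ) (I : ℕ → List ℕ) (h n : ℕ) : Prop :=
  ∀ m, n ≤ m → ∃ ans, M.Out A (I m) h ans

end OMachine

/-- A teacher for the teacher-and-oracle model: it additionally has access to
the oracle answers received so far by the learner. -/
structure OTeacher where
  t : List ℕ → List Bool → List ℕ
  computable : Computable₂ t
  mono : ∀ ⦃σ τ a b⦄, σ <+: τ → a <+: b → t σ a <+: t τ b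
  content_sub : ∀ ⦃σ a x⦄, x ∈ t σ a → x ∈ σ

/-- On the stage inputs `I`, the machine `M` outputs the hypothesis `h` from
stage `n` onwards. -/
def Machine.Settles (M : Machine) (I : ℕ → List ℕ) (h n : ℕ) : Prop :=
  ∀ m, n ≤ m → M.eval (I m) = Part.some h

/-- Settling for the teacher-and-oracle model: `hist m` records the oracle
answers the learner received at stage `m - 1`, which the teacher sees at
stage `m`.  From stage `n` on, the learner outputs `h`. -/
def OMachine.TOSettles (M : OMachine) (T : OTeacher) (A : Set ℕ) (f : ℕ → ℕ)
    (hist : ℕ → List Bool) (h n : ℕ) : Prop :=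
  ∀ m, n ≤ m → M.Out A (T.t (str f m) (hist m)) h (hist (m + 1))

/-! ### Polynomial run-time (PRT) -/

/-- `M` converges to the hypothesis `h` on the stage inputs `I` within fewer
than `B` computation steps. -/
def Machine.PRTIdentifies (M : Machine) (I : ℕ → List ℕ) (h B : ℕ) : Prop :=
  ∃ n, M.Settles I h n ∧ ∃ t, t ∈ M.time (I n) ∧ t < B

/-- Oracle version of `Machine.PRTIdentifies`; the run-time bound also bounds
the oracle use (by `queries_le_time`). -/
def OMachine.PRTIdentifies (M : OMachine) (A : Set ℕ) (I : ℕ → List ℕ) (h B : ℕ) : Prop :=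
  ∃ n, M.Settles A I h n ∧
    ∃ ans t, M.Out A (I n) h ans ∧ t ∈ M.time (I n, ans) ∧ t < B

/-- `M` PRT-learns `𝓕` with polynomial bound `p`. -/
def PRTLearnsWith (M : Machine) (p : Polynomial ℕ) (𝓕 : IndexedFamily) : Prop :=
  ∀ A, 𝓕.Mem A → ∀ f, IsEnum f A →
    ∃ h, 𝓕.F h = A ∧ M.PRTIdentifies (str f) h (p.eval (𝓕.mi A))

/-- `𝓕` is PRT-learnable. -/
def PRT (𝓕 : IndexedFamily) : Prop := ∃ M p, PRTLearnsWith M p 𝓕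

/-- The learner-teacher pair `(M, T)` PRT-learns `𝓕` with polynomial bound `p`. -/
def PRTTLearnsWith (M : Machine) (T : Teacher) (p : Polynomial ℕ) (𝓕 : IndexedFamily) : Prop :=
  ∀ A, 𝓕.Mem A → ∀ f, IsEnum f A →
    ∃ h, 𝓕.F h = A ∧ M.PRTIdentifies (fun m => T.t (str f m)) h (p.eval (𝓕.mi A))

/-- `𝓕` is PRT[T]-learnable. -/
def PRTT (𝓕 : IndexedFamily) : Prop := ∃ M T p, PRTTLearnsWith M T p 𝓕

/-- `𝓕` is PRT[O]-learnable. -/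
def PRTO (𝓕 : IndexedFamily) : Prop :=
  ∃ (M : OMachine) (p : Polynomial ℕ), ∀ A, 𝓕.Mem A → ∀ f, IsEnum f A →
    ∃ h, 𝓕.F h = A ∧ M.PRTIdentifies A (str f) h (p.eval (𝓕.mi A))

/-- `𝓕` is PRT[T,O]-learnable. -/
def PRTTO (𝓕 : IndexedFamily) : Prop :=
  ∃ (M : OMachine) (T : OTeacher) (p : Polynomial ℕ),
    ∀ A, 𝓕.Mem A → ∀ f, IsEnum f A →
      ∃ h, 𝓕.F h = A ∧ ∃ hist : ℕ → List Bool, hist 0 = [] ∧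
        ∃ n, M.TOSettles T A f hist h n ∧
          ∃ t, t ∈ M.time (T.t (str f n) (hist n), hist (n + 1)) ∧ t < p.eval (𝓕.mi A)

/-! ### Polynomial size dataset (PSD) -/

/-- `M` converges to `h` on an initial stage whose input contains fewer than
`B` distinct elements. -/
def Machine.PSDIdentifies (M : Machine) (I : ℕ → List ℕ) (h B : ℕ) : Prop :=
  ∃ n, M.Settles I h n ∧ (I n).toFinset.card < B

/-- Oracle version of `Machine.PSDIdentifies`; the oracle use is also bounded. -/
def OMachine.PSDIdentifies (M : OMachine) (A : Set ℕ) (I : ℕ → List ℕ) (h B : ℕ) : Prop :=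
  ∃ n, M.Settles A I h n ∧ (I n).toFinset.card < B ∧
    ∃ ans, M.Out A (I n) h ans ∧ ans.length ≤ B

/-- `𝓕` is PSD-learnable. -/
def PSD (𝓕 : IndexedFamily) : Prop :=
  ∃ (M : Machine) (p : Polynomial ℕ), ∀ A, 𝓕.Mem A → ∀ f, IsEnum f A →
    ∃ h, 𝓕.F h = A ∧ M.PSDIdentifies (str f) h (p.eval (𝓕.mi A))

/-- `𝓕` is PSD[T]-learnable. -/
def PSDT (𝓕 : IndexedFamily) : Prop :=
  ∃ (M : Machine) (T : Teacher) (p : Polynomial ℕ), ∀ A, 𝓕.Mem A → ∀ f, IsEnum f A →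
    ∃ h, 𝓕.F h = A ∧ M.PSDIdentifies (fun m => T.t (str f m)) h (p.eval (𝓕.mi A))

/-- `𝓕` is PSD[O]-learnable. -/
def PSDO (𝓕 : IndexedFamily) : Prop :=
  ∃ (M : OMachine) (p : Polynomial ℕ), ∀ A, 𝓕.Mem A → ∀ f, IsEnum f A →
    ∃ h, 𝓕.F h = A ∧ M.PSDIdentifies A (str f) h (p.eval (𝓕.mi A))

/-- `𝓕` is PSD[T,O]-learnable. -/
def PSDTO (𝓕 : IndexedFamily) : Prop :=
  ∃ (M : OMachine) (T : OTeacher) (p : Polynomial ℕ),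
    ∀ A, 𝓕.Mem A → ∀ f, IsEnum f A →
      ∃ h, 𝓕.F h = A ∧ ∃ hist : ℕ → List Bool, hist 0 = [] ∧
        ∃ n, M.TOSettles T A f hist h n ∧
          (T.t (str f n) (hist n)).toFinset.card < p.eval (𝓕.mi A) ∧
          (hist (n + 1)).length ≤ p.eval (𝓕.mi A)

/-! ### Polynomial mind-changes (PMC) -/

/-- The set of positions at which the hypothesis stream `g` changes its mind. -/
def MindChanges (g : ℕ → ℕ) : Set ℕ := {i | g i ≠ g (i + 1)}

/-- The hypothesis stream `g` changes its mind at most `B` times, and the only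
hypothesis appearing infinitely often in it is an index of `A` in `𝓕`. -/
def PMCCriterion (𝓕 : IndexedFamily) (A : Set ℕ) (g : ℕ → ℕ) (B : ℕ) : Prop :=
  (MindChanges g).Finite ∧ (MindChanges g).ncard ≤ B ∧
    ∀ h, {i | g i = h}.Infinite → 𝓕.F h = A

/-- `𝓕` is PMC-learnable. -/
def PMC (𝓕 : IndexedFamily) : Prop :=
  ∃ (M : Machine) (p : Polynomial ℕ), ∀ A, 𝓕.Mem A → ∀ f, IsEnum f A →
    ∃ g : ℕ → ℕ, (∀ m, M.eval (str f m) = Part.some (g m)) ∧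
      PMCCriterion 𝓕 A g (p.eval (𝓕.mi A))

/-- `𝓕` is PMC[T]-learnable. -/
def PMCT (𝓕 : IndexedFamily) : Prop :=
  ∃ (M : Machine) (T : Teacher) (p : Polynomial ℕ), ∀ A, 𝓕.Mem A → ∀ f, IsEnum f A →
    ∃ g : ℕ → ℕ, (∀ m, M.eval (T.t (str f m)) = Part.some (g m)) ∧
      PMCCriterion 𝓕 A g (p.eval (𝓕.mi A))

/-- `𝓕` is PMC[O]-learnable. -/
def PMCO (𝓕 : IndexedFamily) : Prop :=
  ∃ (M : OMachine) (p : Polynomial ℕ), ∀ A, 𝓕.Mem A → ∀ f, IsEnum f A →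
    ∃ g : ℕ → ℕ,
      (∀ m, ∃ ans, M.Out A (str f m) (g m) ans ∧ ans.length ≤ p.eval (𝓕.mi A)) ∧
      PMCCriterion 𝓕 A g (p.eval (𝓕.mi A))

/-- `𝓕` is PMC[T,O]-learnable. -/
def PMCTO (𝓕 : IndexedFamily) : Prop :=
  ∃ (M : OMachine) (T : OTeacher) (p : Polynomial ℕ),
    ∀ A, 𝓕.Mem A → ∀ f, IsEnum f A →
      ∃ hist : ℕ → List Bool, hist 0 = [] ∧
        ∃ g : ℕ → ℕ,
          (∀ m, M.Out A (T.t (str f m) (hist m)) (g m) (hist (m + 1)) ∧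
            (hist (m + 1)).length ≤ p.eval (𝓕.mi A)) ∧
          PMCCriterion 𝓕 A g (p.eval (𝓕.mi A))

/-! ### Polynomial size characteristic sample (PCS) -/

/-- `𝓕` is PCS-learnable: there are a machine, a polynomial bound and an
assignment of a characteristic sample to each member of `𝓕`. -/
def PCS (𝓕 : IndexedFamily) : Prop :=
  ∃ (M : Machine) (p : Polynomial ℕ) (S : Set ℕ → Finset ℕ),
    ∀ A, 𝓕.Mem A → ↑(S A) ⊆ A ∧ (S A).card < p.eval (𝓕.mi A) ∧
      ∃ e, 𝓕.F e = A ∧ ∀ f, IsEnum f A → ∀ n, (∀ x ∈ S A, x ∈ str f n) →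
        M.eval (str f n) = Part.some e

/-- `𝓕` is PCS[O]-learnable. -/
def PCSO (𝓕 : IndexedFamily) : Prop :=
  ∃ (M : OMachine) (p : Polynomial ℕ) (S : Set ℕ → Finset ℕ),
    ∀ A, 𝓕.Mem A → ↑(S A) ⊆ A ∧ (S A).card < p.eval (𝓕.mi A) ∧
      ∃ e, 𝓕.F e = A ∧ ∀ f, IsEnum f A → ∀ n, (∀ x ∈ S A, x ∈ str f n) →
        ∃ ans, M.Out A (str f n) e ans ∧ ans.length ≤ p.eval (𝓕.mi A)

/-- `𝓕` is PCS[T]-learnable: the characteristic sample must eventually appear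
in the teacher's output stream, after which the learner locks onto a correct
index. -/
def PCST (𝓕 : IndexedFamily) : Prop :=
  ∃ (M : Machine) (T : Teacher) (p : Polynomial ℕ) (S : Set ℕ → Finset ℕ),
    ∀ A, 𝓕.Mem A → ↑(S A) ⊆ A ∧ (S A).card < p.eval (𝓕.mi A) ∧
      ∃ e, 𝓕.F e = A ∧ ∀ f, IsEnum f A →
        (∃ n, ∀ x ∈ S A, x ∈ T.t (str f n)) ∧
        ∀ n, (∀ x ∈ S A, x ∈ T.t (str f n)) → M.eval (T.t (str f n)) = Part.some e

/-- `𝓕` is PCS[T,O]-learnable. -/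
def PCSTO (𝓕 : IndexedFamily) : Prop :=
  ∃ (M : OMachine) (T : OTeacher) (p : Polynomial ℕ) (S : Set ℕ → Finset ℕ),
    ∀ A, 𝓕.Mem A → ↑(S A) ⊆ A ∧ (S A).card < p.eval (𝓕.mi A) ∧
      ∃ e, 𝓕.F e = A ∧ ∀ f, IsEnum f A →
        ∃ hist : ℕ → List Bool, hist 0 = [] ∧
          (∃ n, ∀ x ∈ S A, x ∈ T.t (str f n) (hist n)) ∧
          ∀ n, (∀ x ∈ S A, x ∈ T.t (str f n) (hist n)) →
            M.Out A (T.t (str f n) (hist n)) e (hist (n + 1)) ∧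
            (hist (n + 1)).length ≤ p.eval (𝓕.mi A)


/-- The polynomial coded by `i` (as its list of coefficients under the fixed
coding of lists by naturals), evaluated at `x`; this is `p_i(x)`. -/
def pEval (i x : ℕ) : ℕ :=
  (Denumerable.ofNat (List ℕ) i).foldr (fun c v => c + x * v) 0

/-- Auxiliary: the list `[a_0, …, a_{n-1}]` where
`a_n = n + 1 + Σ_{i<n} p_i(a_i)`. -/
def aCSDaux : ℕ → List ℕ
  | 0 => []
  | n + 1 =>
    let l := aCSDaux n
    l ++ [n + 1 + (l.zipIdx.map fun q => pEval q.2 q.1).sum]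

/-- `a_n = n + 1 + Σ_{i<n} p_i(a_i)`. -/
def aCSD (n : ℕ) : ℕ := (aCSDaux (n + 1)).getD n 0

/-- `A ⊗ B = {⟨a, b⟩ : a ∈ A, b ∈ B}` under the fixed pairing. -/
def otimes (A B : Set ℕ) : Set ℕ := {m | ∃ a ∈ A, ∃ b ∈ B, m = Nat.pair a b}

/-- `A_n = [0,a_n] ⊗ {p_n(a_n)} ∪ ⋃_{i < p_n(a_n)} [0, a_n + i] ⊗ {i}`. -/
def Aset (n : ℕ) : Set ℕ :=
  otimes (Set.Icc 0 (aCSD n)) {pEval n (aCSD n)} ∪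
    ⋃ i ∈ Set.Iio (pEval n (aCSD n)), otimes (Set.Icc 0 (aCSD n + i)) {i}

/-- `B_{n,i} = ⋃_{j ≤ i} [0, a_n + j] ⊗ {j}`. -/
def Bset (n i : ℕ) : Set ℕ := ⋃ j ∈ Set.Iic i, otimes (Set.Icc 0 (aCSD n + j)) {j}

/-! ### Groundwork: `pEval` -/

lemma pEval_encode (l : List ℕ) (x : ℕ) :
    pEval (Encodable.encode l) x = l.foldr (fun c v => c + x * v) 0 := by
  rw [pEval, Denumerable.ofNat_encode]

lemma foldr_horner_eq_sum (l : List ℕ) (x : ℕ) :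
    l.foldr (fun c v => c + x * v) 0 = ∑ k ∈ Finset.range l.length, l.getD k 0 * x ^ k := by
  induction l with
  | nil => simp
  | cons c l ih =>
    rw [List.foldr_cons, ih, List.length_cons, Finset.sum_range_succ']
    simp only [List.getD_cons_succ, List.getD_cons_zero, pow_zero, mul_one, Finset.mul_sum]
    rw [add_comm]
    congr 1
    refine Finset.sum_congr rfl fun k _ => ?_
    ring

lemma foldr_horner_succ_le (l : List ℕ) (x C : ℕ) (hC : ∀ c ∈ l, c ≤ C) :
    l.foldr (fun c v => c + x * v) 0 + 1 ≤ (C + 1) * (x + 1) ^ l.length := by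
  induction l with
  | nil => simp
  | cons c l ih =>
    have h1 : l.foldr (fun c v => c + x * v) 0 + 1 ≤ (C + 1) * (x + 1) ^ l.length :=
      ih fun c hc => hC c (List.mem_cons_of_mem _ hc)
    have hc : c ≤ C := hC c (List.mem_cons_self)
    rw [List.foldr_cons, List.length_cons, pow_succ, mul_comm ((x+1)^l.length) (x+1)]
    rw [mul_comm (C+1) ((x+1) * (x + 1) ^ l.length)]
    calc c + x * l.foldr (fun c v => c + x * v) 0 + 1
        ≤ (C + 1) + x * l.foldr (fun c v => c + x * v) 0 := by omega
      _ ≤ (C + 1) * (x + 1) ^ l.length + x * ((C + 1) * (x + 1) ^ l.length) := by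
          refine Nat.add_le_add (Nat.le_mul_of_pos_right _ (pow_pos (by omega) _)) ?_
          exact Nat.mul_le_mul_left _ (by omega)
      _ = (x + 1) * (x + 1) ^ l.length * (C + 1) := by ring
      _ ≤ _ := le_refl _

lemma mem_le_encode_list {l : List ℕ} {a : ℕ} (h : a ∈ l) : a ≤ Encodable.encode l := by
  induction l with
  | nil => simp at h
  | cons b l ih =>
    rw [Encodable.encode_list_cons]
    rcases List.mem_cons.1 h with rfl | h
    · have : Encodable.encode a = a := rfl
      calc a = Encodable.encode a := rfl
        _ ≤ Nat.pair (Encodable.encode a) (Encodable.encode l) := Nat.left_le_pair _ _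
        _ ≤ _ := Nat.le_succ _
    · exact (ih h).trans ((Nat.right_le_pair _ _).trans (Nat.le_succ _))

lemma length_le_encode_list (l : List ℕ) : l.length ≤ Encodable.encode l := by
  induction l with
  | nil => simp
  | cons b l ih =>
    rw [Encodable.encode_list_cons, List.length_cons]
    exact Nat.succ_le_succ (ih.trans (Nat.right_le_pair _ _))

lemma pEval_succ_le (i x : ℕ) : pEval i x + 1 ≤ (i + 1) * (x + 1) ^ i := by
  set l := Denumerable.ofNat (List ℕ) i with hl
  have henc : Encodable.encode l = i := Denumerable.encode_ofNat i
  have h1 : pEval i x = l.foldr (fun c v => c + x * v) 0 := rfl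
  have hC : ∀ c ∈ l, c ≤ i := fun c hc => henc ▸ mem_le_encode_list hc
  have hlen : l.length ≤ i := henc ▸ length_le_encode_list l
  calc pEval i x + 1 ≤ (i + 1) * (x + 1) ^ l.length := h1 ▸ foldr_horner_succ_le l x i hC
    _ ≤ (i + 1) * (x + 1) ^ i :=
      Nat.mul_le_mul_left _ (Nat.pow_le_pow_right (by omega) hlen)

lemma succ_le_two_pow (n : ℕ) : n + 1 ≤ 2 ^ n := by
  induction n with
  | zero => simp
  | succ n ih => calc n + 2 ≤ 2 ^ n + 2 ^ n := by omega
                  _ = 2 ^ (n + 1) := by ring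

lemma pEval_lt_two_pow {i x : ℕ} (hix : i ≤ x) : pEval i x < 2 ^ (x * x + x) := by
  have h1 : pEval i x + 1 ≤ (i + 1) * (x + 1) ^ i := pEval_succ_le i x
  have h2 : (i + 1) * (x + 1) ^ i ≤ (x + 1) * (x + 1) ^ x :=
    Nat.mul_le_mul (by omega) (Nat.pow_le_pow_right (by omega) hix)
  have h3 : (x + 1) ≤ 2 ^ x := succ_le_two_pow x
  have h4 : (x + 1) ^ x ≤ (2 ^ x) ^ x := Nat.pow_le_pow_left h3 x
  have h5 : (x + 1) * (x + 1) ^ x ≤ 2 ^ x * 2 ^ (x * x) := by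
    refine Nat.mul_le_mul h3 (h4.trans ?_)
    rw [← pow_mul]
  have : 2 ^ x * 2 ^ (x * x) = 2 ^ (x * x + x) := by rw [← pow_add, add_comm]
  omega

/-! ### Groundwork: `aCSD` -/

lemma aCSDaux_succ (n : ℕ) : aCSDaux (n + 1) =
    aCSDaux n ++ [n + 1 + ((aCSDaux n).zipIdx.map fun q => pEval q.2 q.1).sum] := rfl

lemma length_aCSDaux (n : ℕ) : (aCSDaux n).length = n := by
  induction n with
  | zero => rfl
  | succ n ih => rw [aCSDaux_succ, List.length_append, ih]; rfl

lemma getD_concat_length (l : List ℕ) (a d i : ℕ) (h : i = l.length) :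
    (l ++ [a]).getD i d = a := by
  subst h
  induction l with
  | nil => rfl
  | cons b l ih => simpa using ih

lemma aCSD_eq (n : ℕ) :
    aCSD n = n + 1 + ((aCSDaux n).zipIdx.map fun q => pEval q.2 q.1).sum := by
  have : aCSD n = (aCSDaux (n + 1)).getD n 0 := rfl
  rw [this, aCSDaux_succ]
  exact getD_concat_length _ _ _ _ (length_aCSDaux n).symm

lemma aCSD_zero : aCSD 0 = 1 := rfl

lemma aCSD_succ (n : ℕ) : aCSD (n + 1) = aCSD n + 1 + pEval n (aCSD n) := by
  have h1 := aCSD_eq (n + 1)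
  have h2 := aCSD_eq n
  rw [aCSDaux_succ] at h1
  rw [List.zipIdx_append, List.map_append, List.sum_append] at h1
  have h3 : (List.zipIdx
      [n + 1 + ((aCSDaux n).zipIdx.map fun q => pEval q.2 q.1).sum] (0 + (aCSDaux n).length)).map
      (fun q => pEval q.2 q.1) = [pEval n (aCSD n)] := by
    rw [length_aCSDaux]
    simp [← aCSD_eq]
  rw [h3] at h1
  simp only [List.sum_cons, List.sum_nil, add_zero] at h1
  omega

lemma aCSD_ge (n : ℕ) : n + 1 ≤ aCSD n := by
  induction n with
  | zero => rw [aCSD_zero]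
  | succ n ih => rw [aCSD_succ]; omega

lemma aCSD_strictMono : StrictMono aCSD := by
  apply strictMono_nat_of_lt_succ
  intro n
  rw [aCSD_succ]
  omega

/-! ### Set membership -/

lemma mem_otimes {A B : Set ℕ} {x : ℕ} :
    x ∈ otimes A B ↔ x.unpair.1 ∈ A ∧ x.unpair.2 ∈ B := by
  constructor
  · rintro ⟨a, ha, b, hb, rfl⟩
    simpa [Nat.unpair_pair] using ⟨ha, hb⟩
  · rintro ⟨h1, h2⟩
    exact ⟨_, h1, _, h2, (Nat.pair_unpair x).symm⟩

lemma mem_Aset {n x : ℕ} :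
    x ∈ Aset n ↔ (x.unpair.2 = pEval n (aCSD n) ∧ x.unpair.1 ≤ aCSD n) ∨
      (x.unpair.2 < pEval n (aCSD n) ∧ x.unpair.1 ≤ aCSD n + x.unpair.2) := by
  unfold Aset
  simp only [Set.mem_union, Set.mem_iUnion, mem_otimes, Set.mem_Icc, Set.mem_singleton_iff,
    Set.mem_Iio, exists_prop]
  constructor
  · rintro (⟨⟨-, h1⟩, h2⟩ | ⟨i, hi, ⟨-, h1⟩, h2⟩)
    · exact Or.inl ⟨h2, h1⟩
    · subst h2; exact Or.inr ⟨hi, h1⟩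
  · rintro (⟨h2, h1⟩ | ⟨hi, h1⟩)
    · exact Or.inl ⟨⟨Nat.zero_le _, h1⟩, h2⟩
    · exact Or.inr ⟨x.unpair.2, hi, ⟨Nat.zero_le _, h1⟩, rfl⟩

lemma mem_Bset {n i x : ℕ} :
    x ∈ Bset n i ↔ x.unpair.2 ≤ i ∧ x.unpair.1 ≤ aCSD n + x.unpair.2 := by
  unfold Bset
  simp only [Set.mem_iUnion, mem_otimes, Set.mem_Icc, Set.mem_singleton_iff, Set.mem_Iic,
    exists_prop]
  constructor
  · rintro ⟨j, hj, ⟨-, h1⟩, h2⟩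
    subst h2; exact ⟨hj, h1⟩
  · rintro ⟨hj, h1⟩
    exact ⟨x.unpair.2, hj, ⟨Nat.zero_le _, h1⟩, rfl⟩

lemma pair_mem_Aset {n u v : ℕ} :
    Nat.pair u v ∈ Aset n ↔ (v = pEval n (aCSD n) ∧ u ≤ aCSD n) ∨
      (v < pEval n (aCSD n) ∧ u ≤ aCSD n + v) := by
  rw [mem_Aset, Nat.unpair_pair]

lemma pair_mem_Bset {n i u v : ℕ} :
    Nat.pair u v ∈ Bset n i ↔ v ≤ i ∧ u ≤ aCSD n + v := by
  rw [mem_Bset, Nat.unpair_pair]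

lemma pair_zero_mem_Aset {n k : ℕ} : Nat.pair k 0 ∈ Aset n ↔ k ≤ aCSD n := by
  rw [pair_mem_Aset]
  rcases Nat.eq_zero_or_pos (pEval n (aCSD n)) with h | h <;> omega

lemma pair_zero_mem_Bset {n i k : ℕ} : Nat.pair k 0 ∈ Bset n i ↔ k ≤ aCSD n := by
  rw [pair_mem_Bset]; omega

lemma zero_mem_Aset (n : ℕ) : (0 : ℕ) ∈ Aset n := by
  have : (0 : ℕ) = Nat.pair 0 0 := rfl
  rw [this, pair_zero_mem_Aset]; omega

lemma zero_mem_Bset (n i : ℕ) : (0 : ℕ) ∈ Bset n i := by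
  have : (0 : ℕ) = Nat.pair 0 0 := rfl
  rw [this, pair_zero_mem_Bset]; omega

/-- The sets determine `a_n` through their 0-th column. -/
lemma col0_Aset {n : ℕ} : ∀ k, Nat.pair k 0 ∈ Aset n ↔ k ≤ aCSD n := fun _ => pair_zero_mem_Aset

lemma Aset_ne_Bset {n m j : ℕ} (hj : j < pEval m (aCSD m)) : Aset n ≠ Bset m j := by
  intro h
  have hnm : aCSD n = aCSD m := by
    have h1 := h ▸ (pair_zero_mem_Aset (n := n) (k := aCSD n)).2 le_rfl
    have h2 := h.symm ▸ (pair_zero_mem_Bset (n := m) (i := j) (k := aCSD m)).2 le_rfl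
    rw [pair_zero_mem_Bset] at h1
    rw [pair_zero_mem_Aset] at h2
    omega
  have hnmeq : n = m := aCSD_strictMono.injective hnm
  subst hnmeq
  have h1 : Nat.pair 0 (pEval n (aCSD n)) ∈ Aset n := by
    rw [pair_mem_Aset]; omega
  rw [h, pair_mem_Bset] at h1
  omega

lemma Aset_inj {n m : ℕ} (h : Aset n = Aset m) : n = m := by
  apply aCSD_strictMono.injective
  have h1 := h ▸ (pair_zero_mem_Aset (n := n) (k := aCSD n)).2 le_rfl
  have h2 := h.symm ▸ (pair_zero_mem_Aset (n := m) (k := aCSD m)).2 le_rfl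
  rw [pair_zero_mem_Aset] at h1 h2
  omega

lemma Bset_inj {n m i j : ℕ} (h : Bset n i = Bset m j) : n = m ∧ i = j := by
  have hnm : aCSD n = aCSD m := by
    have h1 := h ▸ (pair_zero_mem_Bset (n := n) (i := i) (k := aCSD n)).2 le_rfl
    have h2 := h.symm ▸ (pair_zero_mem_Bset (n := m) (i := j) (k := aCSD m)).2 le_rfl
    rw [pair_zero_mem_Bset] at h1 h2
    omega
  refine ⟨aCSD_strictMono.injective hnm, ?_⟩
  have h1 := h ▸ (pair_mem_Bset (n := n) (i := i) (u := 0) (v := i)).2 (by omega)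
  have h2 := h.symm ▸ (pair_mem_Bset (n := m) (i := j) (u := 0) (v := j)).2 (by omega)
  rw [pair_mem_Bset] at h1 h2
  omega

lemma Bset_subset_Aset {n i : ℕ} (hi : i < pEval n (aCSD n)) : Bset n i ⊆ Aset n := by
  intro x hx
  rw [mem_Bset] at hx
  rw [mem_Aset]
  omega

lemma Bset_mono {n : ℕ} {i j : ℕ} (h : i ≤ j) : Bset n i ⊆ Bset n j := by
  intro x hx
  rw [mem_Bset] at hx ⊢
  omega

/-! ### The family CSD -/

/-- Maximum `m ≤ k` (in fact `m < k+1`) with `aCSD m ≤ k`; `0` if none. -/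
def maxfit (k : ℕ) : ℕ :=
  ((List.range (k + 1)).map (fun m => if aCSD m ≤ k then m else 0)).foldr max 0

lemma le_foldr_max {l : List ℕ} {x : ℕ} (h : x ∈ l) : x ≤ l.foldr max 0 := by
  induction l with
  | nil => simp at h
  | cons b l ih =>
    rcases List.mem_cons.1 h with rfl | h
    · exact le_max_left _ _
    · exact (ih h).trans (le_max_right _ _)

lemma foldr_max_le {l : List ℕ} {c : ℕ} (h : ∀ x ∈ l, x ≤ c) : l.foldr max 0 ≤ c := by
  induction l with
  | nil => simp
  | cons b l ih =>
    simp only [List.foldr_cons, max_le_iff]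
    exact ⟨h b (List.mem_cons_self), ih fun x hx => h x (List.mem_cons_of_mem _ hx)⟩

lemma maxfit_eq {n k : ℕ} (h1 : aCSD n ≤ k) (h2 : k < aCSD (n + 1)) : maxfit k = n := by
  apply le_antisymm
  · apply foldr_max_le
    intro x hx
    rcases List.mem_map.1 hx with ⟨m, -, rfl⟩
    split
    · rename_i hm
      by_contra hc
      have : n + 1 ≤ m := by omega
      exact absurd ((aCSD_strictMono.le_iff_le.2 this).trans hm) (by omega)
    · omega
  · apply le_foldr_max
    apply List.mem_map.2
    refine ⟨n, List.mem_range.2 ?_, if_pos h1⟩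
    have := aCSD_ge n
    omega

/-- Level of index `k` : the unique `n` with `aCSD n ≤ k < aCSD (n+1)` (or `0` for `k = 0`). -/
lemma maxfit_spec (k : ℕ) (hk : 1 ≤ k) :
    aCSD (maxfit k) ≤ k ∧ k < aCSD (maxfit k + 1) := by
  have hex : ∃ n, aCSD n ≤ k ∧ k < aCSD (n + 1) := by
    have h0 : aCSD 0 ≤ k := by rw [aCSD_zero]; omega
    by_contra hc
    push_neg at hc
    have : ∀ n, aCSD n ≤ k := by
      intro n
      induction n with
      | zero => exact h0
      | succ n ih => exact hc n ih
    have := this k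
    have := aCSD_ge k
    omega
  obtain ⟨n, hn1, hn2⟩ := hex
  rw [maxfit_eq hn1 hn2]
  exact ⟨hn1, hn2⟩

/-- Membership function of the family: `memF x k` decides `x ∈ F k`. -/
def memF (x k : ℕ) : Bool :=
  let n := maxfit k
  let a := aCSD n
  let j := k - a
  let P := pEval n a
  let u := x.unpair.1
  let v := x.unpair.2
  cond ((j == 0) || (j == P))
    (((v == P) && Nat.ble u a) || (Nat.blt v P && Nat.ble u (a + v)))
    (Nat.ble v j && Nat.ble u (a + v))

lemma memF_eq_Aset {x k : ℕ} (h : k - aCSD (maxfit k) = 0 ∨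
    k - aCSD (maxfit k) = pEval (maxfit k) (aCSD (maxfit k))) :
    (memF x k = true) ↔ x ∈ Aset (maxfit k) := by
  unfold memF
  simp only []
  rw [mem_Aset]
  rcases h with h | h <;>
    simp [h, Nat.ble_eq, Nat.blt_eq, Bool.or_eq_true, Bool.and_eq_true, beq_iff_eq]

lemma memF_eq_Bset {x k : ℕ} (h0 : k - aCSD (maxfit k) ≠ 0)
    (hP : k - aCSD (maxfit k) ≠ pEval (maxfit k) (aCSD (maxfit k))) :
    (memF x k = true) ↔ x ∈ Bset (maxfit k) (k - aCSD (maxfit k)) := by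
  unfold memF
  simp only []
  rw [mem_Bset]
  have h1 : ((k - aCSD (maxfit k) == 0) || (k - aCSD (maxfit k) == pEval (maxfit k) (aCSD (maxfit k)))) = false := by
    simp [h0, hP]
  rw [h1]
  simp [Nat.ble_eq, Bool.and_eq_true]

/-! ### Computability of the basic functions -/

lemma pEval_primrec : Primrec₂ pEval := by
  have h : Primrec fun p : ℕ × ℕ =>
      (Denumerable.ofNat (List ℕ) p.1).foldr (fun c v => c + p.2 * v) 0 :=
    Primrec.list_foldr ((Primrec.ofNat (List ℕ)).comp Primrec.fst) (Primrec.const 0)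
      (Primrec.nat_add.comp (Primrec.fst.comp Primrec.snd)
        (Primrec.nat_mul.comp (Primrec.snd.comp Primrec.fst)
          (Primrec.snd.comp Primrec.snd))).to₂
  exact h

lemma aCSD_primrec : Primrec aCSD := by
  have h : Primrec (fun n => Nat.rec 1 (fun m ih => ih + 1 + pEval m ih) n : ℕ → ℕ) :=
    Primrec.nat_rec₁ 1
      ((Primrec.nat_add.comp (Primrec.succ.comp Primrec.snd)
        (pEval_primrec.comp Primrec.fst Primrec.snd)).to₂)
  apply h.of_eq
  intro n
  induction n with
  | zero => exact aCSD_zero.symm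
  | succ n ih => rw [aCSD_succ, ← ih]

lemma maxfit_primrec : Primrec maxfit := by
  have hmap : Primrec fun k =>
      (List.range (k + 1)).map fun m => if aCSD m ≤ k then m else 0 :=
    Primrec.list_map (Primrec.list_range.comp Primrec.succ)
      ((Primrec.ite
        (Primrec.nat_le.comp (aCSD_primrec.comp Primrec.snd) Primrec.fst)
        Primrec.snd (Primrec.const 0)).to₂)
  have h : Primrec fun k =>
      ((List.range (k + 1)).map fun m => if aCSD m ≤ k then m else 0).foldr max 0 :=
    Primrec.list_foldr hmap (Primrec.const 0)
      ((Primrec.nat_max.comp (Primrec.fst.comp Primrec.snd)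
        (Primrec.snd.comp Primrec.snd)).to₂)
  exact h

lemma ble_primrec : Primrec₂ Nat.ble := by
  have h : Primrec₂ fun a b : ℕ => decide (a ≤ b) := Primrec.nat_le.decide
  apply h.of_eq
  intro a b
  rw [Bool.eq_iff_iff]
  simp [Nat.ble_eq]

lemma blt_primrec : Primrec₂ Nat.blt := by
  have h : Primrec fun p : ℕ × ℕ => Nat.ble (p.1 + 1) p.2 :=
    ble_primrec.comp (Primrec.succ.comp Primrec.fst) Primrec.snd
  apply h.of_eq
  intro p
  rfl

lemma memF_primrec : Primrec₂ memF := by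
  unfold memF
  simp only []
  -- components as functions of q : ℕ × ℕ  (q.1 = x, q.2 = k)
  have hn : Primrec fun q : ℕ × ℕ => maxfit q.2 := maxfit_primrec.comp Primrec.snd
  have ha : Primrec fun q : ℕ × ℕ => aCSD (maxfit q.2) := aCSD_primrec.comp hn
  have hj : Primrec fun q : ℕ × ℕ => q.2 - aCSD (maxfit q.2) :=
    Primrec.nat_sub.comp Primrec.snd ha
  have hP : Primrec fun q : ℕ × ℕ => pEval (maxfit q.2) (aCSD (maxfit q.2)) :=
    pEval_primrec.comp hn ha
  have hu : Primrec fun q : ℕ × ℕ => q.1.unpair.1 :=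
    Primrec.fst.comp (Primrec.unpair.comp Primrec.fst)
  have hv : Primrec fun q : ℕ × ℕ => q.1.unpair.2 :=
    Primrec.snd.comp (Primrec.unpair.comp Primrec.fst)
  have hcond : Primrec fun q : ℕ × ℕ =>
      ((q.2 - aCSD (maxfit q.2) == 0) ||
        (q.2 - aCSD (maxfit q.2) == pEval (maxfit q.2) (aCSD (maxfit q.2)))) :=
    Primrec.dom_bool₂ _ |>.comp (Primrec.beq.comp hj (Primrec.const 0)) (Primrec.beq.comp hj hP)
  have htrue : Primrec fun q : ℕ × ℕ =>
      (((q.1.unpair.2 == pEval (maxfit q.2) (aCSD (maxfit q.2))) &&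
          Nat.ble q.1.unpair.1 (aCSD (maxfit q.2))) ||
        (Nat.blt q.1.unpair.2 (pEval (maxfit q.2) (aCSD (maxfit q.2))) &&
          Nat.ble q.1.unpair.1 (aCSD (maxfit q.2) + q.1.unpair.2))) := by
    refine Primrec.dom_bool₂ _ |>.comp ?_ ?_
    · exact Primrec.dom_bool₂ _ |>.comp (Primrec.beq.comp hv hP) (ble_primrec.comp hu ha)
    · exact Primrec.dom_bool₂ _ |>.comp (blt_primrec.comp hv hP)
        (ble_primrec.comp hu (Primrec.nat_add.comp ha hv))
  have hfalse : Primrec fun q : ℕ × ℕ =>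
      (Nat.ble q.1.unpair.2 (q.2 - aCSD (maxfit q.2)) &&
        Nat.ble q.1.unpair.1 (aCSD (maxfit q.2) + q.1.unpair.2)) :=
    Primrec.dom_bool₂ _ |>.comp (ble_primrec.comp hv hj)
      (ble_primrec.comp hu (Primrec.nat_add.comp ha hv))
  exact (Primrec.cond hcond htrue hfalse).to₂

/-! ### The indexed family -/

lemma pEval_zero (x : ℕ) : pEval 0 x = 0 := by
  rw [pEval, Denumerable.list_ofNat_zero]
  rfl

lemma maxfit_zero : maxfit 0 = 0 := by
  apply Nat.le_antisymm
  · apply foldr_max_le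
    intro x hx
    rcases List.mem_map.1 hx with ⟨m, hm, rfl⟩
    simp only [List.mem_range] at hm
    interval_cases m
    simp [aCSD_zero]
  · omega

def FCSD (k : ℕ) : Set ℕ := {x | memF x k = true}

lemma FCSD_classify (k : ℕ) :
    FCSD k = Aset (maxfit k) ∨
      (0 < k - aCSD (maxfit k) ∧
        k - aCSD (maxfit k) < pEval (maxfit k) (aCSD (maxfit k)) ∧
        FCSD k = Bset (maxfit k) (k - aCSD (maxfit k))) := by
  by_cases h : k - aCSD (maxfit k) = 0 ∨ k - aCSD (maxfit k) = pEval (maxfit k) (aCSD (maxfit k))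
  · left
    ext x
    exact memF_eq_Aset h
  · push_neg at h
    right
    have hk : 1 ≤ k := by
      by_contra hk
      have : k = 0 := by omega
      subst this
      rw [maxfit_zero, aCSD_zero] at h
      simp at h
    have hspec := maxfit_spec k hk
    rw [aCSD_succ] at hspec
    refine ⟨by omega, by omega, ?_⟩
    ext x
    exact memF_eq_Bset h.1 h.2

lemma FCSD_aCSD (n : ℕ) : FCSD (aCSD n) = Aset n := by
  have h1 : maxfit (aCSD n) = n :=
    maxfit_eq le_rfl (aCSD_strictMono (Nat.lt_succ_self n))
  ext x
  rw [FCSD, Set.mem_setOf_eq, memF_eq_Aset (by rw [h1]; omega), h1]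

lemma FCSD_Bset {n j : ℕ} (h0 : 0 < j) (hP : j < pEval n (aCSD n)) :
    FCSD (aCSD n + j) = Bset n j := by
  have h1 : maxfit (aCSD n + j) = n := by
    apply maxfit_eq (by omega)
    rw [aCSD_succ]
    omega
  ext x
  rw [FCSD, Set.mem_setOf_eq, memF_eq_Bset (by rw [h1]; omega) (by rw [h1]; omega), h1,
    show aCSD n + j - aCSD n = j by omega]

lemma FCSD_top (n : ℕ) : FCSD (aCSD n + pEval n (aCSD n)) = Aset n := by
  have h1 : maxfit (aCSD n + pEval n (aCSD n)) = n := by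
    apply maxfit_eq (by omega)
    rw [aCSD_succ]
    omega
  ext x
  rw [FCSD, Set.mem_setOf_eq, memF_eq_Aset (by rw [h1]; omega), h1]

lemma FCSD_eq_Aset {k n : ℕ} (h : FCSD k = Aset n) (hn : n ≠ 0) : aCSD n ≤ k := by
  rcases FCSD_classify k with hc | ⟨h1, h2, hc⟩
  · rw [h] at hc
    have := Aset_inj hc
    subst this
    rcases Nat.eq_zero_or_pos k with rfl | hk
    · rw [maxfit_zero] at hn
      omega
    · exact (maxfit_spec k hk).1
  · rw [h] at hc
    exact absurd hc (Aset_ne_Bset h2)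

lemma FCSD_eq_Bset {k n i : ℕ} (h0 : 0 < i) (hP : i < pEval n (aCSD n))
    (h : FCSD k = Bset n i) : k = aCSD n + i := by
  rcases FCSD_classify k with hc | ⟨h1, h2, hc⟩
  · rw [h] at hc
    exact absurd hc.symm (Aset_ne_Bset hP)
  · rw [h] at hc
    obtain ⟨rfl, h4⟩ := Bset_inj hc.symm
    have hk : 1 ≤ k := by
      by_contra hk
      have : k = 0 := by omega
      subst this
      simp at h1
    have := (maxfit_spec k hk).1
    omega

lemma mem_FCSD_zero (k : ℕ) : (0 : ℕ) ∈ FCSD k := by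
  rcases FCSD_classify k with hc | ⟨-, -, hc⟩
  · rw [hc]; exact zero_mem_Aset _
  · rw [hc]; exact zero_mem_Bset _ _

lemma memF_computable : Computable fun q : ℕ × ℕ => memF q.1 q.2 :=
  memF_primrec.to_comp

/-- The family 𝓒𝓢𝓓 of column self-describing sets. -/
def CSD : IndexedFamily where
  F := FCSD
  nonempty k := ⟨0, mem_FCSD_zero k⟩
  uce := by
    apply ComputablePred.to_re
    rw [ComputablePred.computable_iff]
    exact ⟨fun q => memF q.1 q.2, memF_computable, rfl⟩

lemma CSD_mi_Aset {n : ℕ} (hn : n ≠ 0) : CSD.mi (Aset n) = aCSD n := by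
  apply le_antisymm
  · exact Nat.sInf_le (FCSD_aCSD n)
  · exact le_csInf ⟨aCSD n, FCSD_aCSD n⟩ fun k hk => FCSD_eq_Aset hk hn

lemma CSD_mi_Aset_le (n : ℕ) : CSD.mi (Aset n) ≤ aCSD n := Nat.sInf_le (FCSD_aCSD n)

lemma CSD_mi_Bset {n i : ℕ} (h0 : 0 < i) (hP : i < pEval n (aCSD n)) :
    CSD.mi (Bset n i) = aCSD n + i := by
  apply le_antisymm
  · exact Nat.sInf_le (FCSD_Bset h0 hP)
  · exact le_csInf ⟨aCSD n + i, FCSD_Bset h0 hP⟩ fun k hk => le_of_eq (FCSD_eq_Bset h0 hP hk).symm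

/-! ### The oracle machine -/

def nfind (a : ℕ) : ℕ :=
  ((List.range (a + 1)).map fun m => if aCSD m = a then m else 0).foldr max 0

lemma nfind_aCSD (n : ℕ) : nfind (aCSD n) = n := by
  apply le_antisymm
  · apply foldr_max_le
    intro x hx
    rcases List.mem_map.1 hx with ⟨m, -, rfl⟩
    split
    · rename_i hm
      exact le_of_eq (aCSD_strictMono.injective hm)
    · omega
  · apply le_foldr_max
    apply List.mem_map.2
    refine ⟨n, List.mem_range.2 ?_, if_pos rfl⟩
    have := aCSD_ge n
    omega

def stepFun (ans : List Bool) : ℕ :=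
  let k := ans.idxOf false
  if k = ans.length then 2 * Nat.pair (ans.length + 1) 0
  else
    let P := pEval (nfind k) k
    let rest := ans.drop (k + 1)
    if rest.length = 0 then 2 * Nat.pair 0 P
    else
      cond rest.headI (2 * k + 1)
        (let rest' := rest.tail
         let r := rest'.idxOf false
         if r = rest'.length then
           if rest'.length + 1 < P then 2 * Nat.pair 0 (rest'.length + 1)
           else 2 * (k + rest'.length) + 1
         else 2 * (k + r) + 1)

lemma nfind_primrec : Primrec nfind := by
  have hmap : Primrec fun a =>
      (List.range (a + 1)).map fun m => if aCSD m = a then m else 0 :=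
    Primrec.list_map (Primrec.list_range.comp Primrec.succ)
      ((Primrec.ite
        (Primrec.eq.comp (aCSD_primrec.comp Primrec.snd) Primrec.fst)
        Primrec.snd (Primrec.const 0)).to₂)
  exact Primrec.list_foldr hmap (Primrec.const 0)
    ((Primrec.nat_max.comp (Primrec.fst.comp Primrec.snd)
      (Primrec.snd.comp Primrec.snd)).to₂)

lemma drop_primrec : Primrec₂ (fun (n : ℕ) (l : List Bool) => l.drop n) := by
  have h : Primrec fun p : ℕ × List Bool =>
      (Nat.rec p.2 (fun _ ih => ih.tail) p.1 : List Bool) :=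
    Primrec.nat_rec' Primrec.fst Primrec.snd
      ((Primrec.list_tail.comp (Primrec.snd.comp Primrec.snd)).to₂)
  apply h.of_eq
  rintro ⟨n, l⟩
  induction n with
  | zero => rfl
  | succ n ih => simp only [ih, List.tail_drop]

lemma stepFun_primrec : Primrec stepFun := by
  unfold stepFun
  simp only []
  have hidx : Primrec fun l : List Bool => l.idxOf false :=
    Primrec.list_idxOf.comp (Primrec.const false) Primrec.id
  have hlen : Primrec fun l : List Bool => l.length := Primrec.list_length
  have hP : Primrec fun l : List Bool => pEval (nfind (l.idxOf false)) (l.idxOf false) :=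
    pEval_primrec.comp (nfind_primrec.comp hidx) hidx
  have hrest : Primrec fun l : List Bool => l.drop (l.idxOf false + 1) :=
    drop_primrec.comp (Primrec.succ.comp hidx) Primrec.id
  have hrest' : Primrec fun l : List Bool => (l.drop (l.idxOf false + 1)).tail :=
    Primrec.list_tail.comp hrest
  have hr : Primrec fun l : List Bool => ((l.drop (l.idxOf false + 1)).tail).idxOf false :=
    Primrec.list_idxOf.comp (Primrec.const false) hrest'
  have hrlen : Primrec fun l : List Bool => ((l.drop (l.idxOf false + 1)).tail).length :=
    Primrec.list_length.comp hrest'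
  refine Primrec.ite (Primrec.eq.comp hidx hlen) ?_ ?_
  · exact Primrec.nat_double.comp
      (Primrec₂.natPair.comp (Primrec.succ.comp hlen) (Primrec.const 0))
  refine Primrec.ite (Primrec.eq.comp (Primrec.list_length.comp hrest) (Primrec.const 0)) ?_ ?_
  · exact Primrec.nat_double.comp (Primrec₂.natPair.comp (Primrec.const 0) hP)
  refine Primrec.cond (Primrec.list_headI.comp hrest)
    (Primrec.succ.comp (Primrec.nat_double.comp hidx)) ?_
  refine Primrec.ite (Primrec.eq.comp hr hrlen) ?_ ?_
  · refine Primrec.ite (Primrec.nat_lt.comp (Primrec.succ.comp hrlen) hP) ?_ ?_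
    · exact Primrec.nat_double.comp
        (Primrec₂.natPair.comp (Primrec.const 0) (Primrec.succ.comp hrlen))
    · exact Primrec.succ.comp (Primrec.nat_double.comp (Primrec.nat_add.comp hidx hrlen))
  · exact Primrec.succ.comp (Primrec.nat_double.comp (Primrec.nat_add.comp hidx hr))

/-! ### The machine object -/

def maxsize (l : List Bool) : ℕ :=
  ((List.range (l.length + 1)).map fun k => Nat.size (stepFun (l.take k))).foldr max 0

lemma size_stepFun_le_maxsize (l : List Bool) : Nat.size (stepFun l) ≤ maxsize l := by
  apply le_foldr_max
  apply List.mem_map.2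
  exact ⟨l.length, List.mem_range.2 (Nat.lt_succ_self _), by rw [List.take_length]⟩

lemma maxsize_mono {l1 l2 : List Bool} (h : l1 <+: l2) : maxsize l1 ≤ maxsize l2 := by
  apply foldr_max_le
  intro x hx
  rcases List.mem_map.1 hx with ⟨k, hk, rfl⟩
  rw [List.mem_range] at hk
  have htake : l1.take k = l2.take k := by
    rw [List.prefix_iff_eq_take.1 h, List.take_take, min_eq_left (by omega)]
  rw [htake]
  apply le_foldr_max
  apply List.mem_map.2
  exact ⟨k, List.mem_range.2 (by have := h.length_le; omega), rfl⟩

lemma maxsize_le {l : List Bool} {B : ℕ}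
    (h : ∀ k, k ≤ l.length → Nat.size (stepFun (l.take k)) ≤ B) : maxsize l ≤ B := by
  apply foldr_max_le
  intro x hx
  rcases List.mem_map.1 hx with ⟨k, hk, rfl⟩
  rw [List.mem_range] at hk
  exact h k (by omega)

def OM : OMachine where
  step x := Part.some (stepFun x.2)
  partrec := (stepFun_primrec.comp Primrec.snd).to_comp
  time x := Part.some (x.1.length + x.2.length + maxsize x.2)
  time_dom x := by simp
  length_le_time := by
    rintro x t ht
    rw [Part.mem_some_iff] at ht
    omega
  queries_le_time := by
    rintro x t ht
    rw [Part.mem_some_iff] at ht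
    omega
  size_le_time := by
    rintro x t h ht hv
    rw [Part.mem_some_iff] at ht hv
    subst ht hv
    have := size_stepFun_le_maxsize x.2
    omega
  time_mono := by
    rintro σ τ a b s t h1 h2 hs ht
    rw [Part.mem_some_iff] at hs ht
    subst hs ht
    have := h1.length_le
    have := h2.length_le
    have := maxsize_mono h2
    dsimp only
    omega

lemma OM_step (x : List ℕ × List Bool) : OM.step x = Part.some (stepFun x.2) := rfl

lemma OM_reach_snoc {A : Set ℕ} {σ : List ℕ} {ans : List Bool} {q : ℕ} {b : Bool}
    (h : OM.Reach A σ ans) (hq : stepFun ans = 2 * q) (hb : decide (q ∈ A) = b) :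
    OM.Reach A σ (ans ++ [b]) := by
  subst hb
  exact OMachine.Reach.query h (by rw [OM_step, Part.mem_some_iff, hq])

lemma OM_out {A : Set ℕ} {σ : List ℕ} {ans : List Bool} {h : ℕ}
    (hr : OM.Reach A σ ans) (hs : stepFun ans = 2 * h + 1) : OM.Out A σ h ans :=
  ⟨hr, by rw [OM_step, Part.mem_some_iff, hs]⟩

/-! ### Canonical runs of the machine -/

lemma indexOf_false_replicate (s : ℕ) : (List.replicate s true).idxOf false = s := by
  induction s with
  | zero => rfl
  | succ s ih => rw [List.replicate_succ, List.idxOf_cons]; simp [ih]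

lemma indexOf_false_canon (a : ℕ) (rest : List Bool) :
    (List.replicate a true ++ false :: rest).idxOf false = a := by
  induction a with
  | zero => simp [List.idxOf_cons]
  | succ a ih => rw [List.replicate_succ, List.cons_append, List.idxOf_cons]; simp [ih]

lemma drop_canon (a : ℕ) (rest : List Bool) :
    (List.replicate a true ++ false :: rest).drop (a + 1) = rest := by
  rw [List.append_cons]
  exact List.drop_left' (by simp)

lemma take_canon (a : ℕ) (rest : List Bool) (k : ℕ) :
    (List.replicate a true ++ false :: rest).take k =
      if k ≤ a then List.replicate k true
      else List.replicate a true ++ false :: rest.take (k - (a + 1)) := by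
  split
  · rename_i h
    rw [List.take_append_of_le_length (by simp [h]), List.take_replicate,
      min_eq_left h]
  · rename_i h
    have h1 : (List.replicate a true).length = a := by simp
    have h2 := List.take_length_add_append (l₁ := List.replicate a true) (l₂ := false :: rest) (k - a)
    rw [h1] at h2
    rw [show k = a + (k - a) by omega, h2,
      show k - a = (k - (a + 1)) + 1 by omega, List.take_succ_cons]
    rw [show a + (k - (a + 1) + 1) - (a + 1) = k - (a + 1) by omega]

lemma stepFun_replicate (s : ℕ) :
    stepFun (List.replicate s true) = 2 * Nat.pair (s + 1) 0 := by
  unfold stepFun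
  simp [indexOf_false_replicate]

lemma stepFun_canon (a : ℕ) (rest : List Bool) :
    stepFun (List.replicate a true ++ false :: rest) =
      if rest.length = 0 then 2 * Nat.pair 0 (pEval (nfind a) a)
      else
        cond rest.headI (2 * a + 1)
          (if rest.tail.idxOf false = rest.tail.length then
            if rest.tail.length + 1 < pEval (nfind a) a then
              2 * Nat.pair 0 (rest.tail.length + 1)
            else 2 * (a + rest.tail.length) + 1
          else 2 * (a + rest.tail.idxOf false) + 1) := by
  unfold stepFun
  have h1 := indexOf_false_canon a rest
  have h2 : (List.replicate a true ++ false :: rest).length = a + rest.length + 1 := by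
    simp; omega
  have h3 := drop_canon a rest
  simp only [h1, h2, h3]
  rw [if_neg (by omega)]

/-! ### Evaluating `stepFun` on canonical strings -/

lemma stepFun_phase2_nil (a : ℕ) :
    stepFun (List.replicate a true ++ [false]) = 2 * Nat.pair 0 (pEval (nfind a) a) := by
  rw [show (List.replicate a true ++ [false] : List Bool)
      = List.replicate a true ++ false :: [] by rfl, stepFun_canon]
  simp

lemma stepFun_phase2_true (a : ℕ) (rest : List Bool) :
    stepFun (List.replicate a true ++ false :: true :: rest) = 2 * a + 1 := by
  rw [stepFun_canon]
  simp

lemma stepFun_phase3_rep (a s : ℕ) :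
    stepFun (List.replicate a true ++ false :: false :: List.replicate s true) =
      if s + 1 < pEval (nfind a) a then 2 * Nat.pair 0 (s + 1) else 2 * (a + s) + 1 := by
  rw [stepFun_canon]
  simp [indexOf_false_replicate]

lemma stepFun_phase3_repF (a s : ℕ) :
    stepFun (List.replicate a true ++ false :: (false :: (List.replicate s true ++ [false]))) =
      2 * (a + s) + 1 := by
  rw [stepFun_canon]
  have hidx := indexOf_false_canon s ([] : List Bool)
  simp only [List.length_cons, List.headI, List.tail_cons, cond_false]
  rw [if_neg (by simp)]
  simp only [hidx]
  rw [if_neg (by simp)]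

/-! ### Reaching and halting on family members -/

section Runs

variable {S : Set ℕ} {n : ℕ}

lemma reach_phase1 (hcol : ∀ k, Nat.pair k 0 ∈ S ↔ k ≤ aCSD n) (σ : List ℕ) :
    ∀ s, s ≤ aCSD n → OM.Reach S σ (List.replicate s true) := by
  intro s
  induction s with
  | zero => intro _; exact OMachine.Reach.nil
  | succ s ih =>
    intro hs
    rw [List.replicate_succ' (n := s) (a := true)]
    refine OM_reach_snoc (ih (by omega)) (stepFun_replicate s) ?_
    exact decide_eq_true ((hcol (s + 1)).2 (by omega))

lemma reach_phase2 (hcol : ∀ k, Nat.pair k 0 ∈ S ↔ k ≤ aCSD n) (σ : List ℕ) :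
    OM.Reach S σ (List.replicate (aCSD n) true ++ [false]) := by
  refine OM_reach_snoc (reach_phase1 hcol σ _ le_rfl) (stepFun_replicate _) ?_
  refine decide_eq_false fun hmem => ?_
  have := (hcol (aCSD n + 1)).1 hmem
  omega

/-- Canonical halting run on `Aset n`. -/
lemma out_Aset (n : ℕ) (σ : List ℕ) :
    OM.Out (Aset n) σ (aCSD n) (List.replicate (aCSD n) true ++ [false, true]) := by
  have hcol : ∀ k, Nat.pair k 0 ∈ Aset n ↔ k ≤ aCSD n := fun k => pair_zero_mem_Aset
  have hreach : OM.Reach (Aset n) σ (List.replicate (aCSD n) true ++ [false, true]) := by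
    have h1 := reach_phase2 (S := Aset n) hcol σ
    have h2 : stepFun (List.replicate (aCSD n) true ++ [false]) =
        2 * Nat.pair 0 (pEval n (aCSD n)) := by
      rw [stepFun_phase2_nil, nfind_aCSD]
    have h3 : decide (Nat.pair 0 (pEval n (aCSD n)) ∈ Aset n) = true :=
      decide_eq_true (pair_mem_Aset.2 (Or.inl ⟨rfl, Nat.zero_le _⟩))
    have := OM_reach_snoc h1 h2 h3
    simpa using this
  exact OM_out hreach (stepFun_phase2_true _ _)

/-- Canonical halting run on `Bset n i`. -/
lemma out_Bset (n i : ℕ) (h0 : 0 < i) (hP : i < pEval n (aCSD n)) (σ : List ℕ) :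
    OM.Out (Bset n i) σ (aCSD n + i)
      (List.replicate (aCSD n) true ++ false :: false :: List.replicate i true ++
        (if i + 1 < pEval n (aCSD n) then [false] else [])) := by
  have hcol : ∀ k, Nat.pair k 0 ∈ Bset n i ↔ k ≤ aCSD n := fun k => pair_zero_mem_Bset
  have hreach2 : OM.Reach (Bset n i) σ
      (List.replicate (aCSD n) true ++ [false, false]) := by
    have h1 := reach_phase2 (S := Bset n i) hcol σ
    have h2 : stepFun (List.replicate (aCSD n) true ++ [false]) =
        2 * Nat.pair 0 (pEval n (aCSD n)) := by
      rw [stepFun_phase2_nil, nfind_aCSD]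
    have h3 : decide (Nat.pair 0 (pEval n (aCSD n)) ∈ Bset n i) = false := by
      refine decide_eq_false fun hmem => ?_
      rw [pair_mem_Bset] at hmem
      omega
    have := OM_reach_snoc h1 h2 h3
    simpa using this
  have hreach3 : ∀ s, s ≤ i → OM.Reach (Bset n i) σ
      (List.replicate (aCSD n) true ++ false :: false :: List.replicate s true) := by
    intro s
    induction s with
    | zero =>
      intro _
      simpa using hreach2
    | succ s ih =>
      intro hs
      have hq : stepFun (List.replicate (aCSD n) true ++
          false :: false :: List.replicate s true) = 2 * Nat.pair 0 (s + 1) := by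
        rw [stepFun_phase3_rep, nfind_aCSD,
          if_pos (show s + 1 < pEval n (aCSD n) by omega)]
      have hb : decide (Nat.pair 0 (s + 1) ∈ Bset n i) = true :=
        decide_eq_true (pair_mem_Bset.2 ⟨by omega, by omega⟩)
      have := OM_reach_snoc (ih (by omega)) hq hb
      rw [List.replicate_succ' (n := s) (a := true)]
      simpa [List.append_assoc] using this
  by_cases hcase : i + 1 < pEval n (aCSD n)
  · have hq : stepFun (List.replicate (aCSD n) true ++
        false :: false :: List.replicate i true) = 2 * Nat.pair 0 (i + 1) := by
      rw [stepFun_phase3_rep, nfind_aCSD, if_pos hcase]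
    have hb : decide (Nat.pair 0 (i + 1) ∈ Bset n i) = false := by
      refine decide_eq_false fun hmem => ?_
      rw [pair_mem_Bset] at hmem
      omega
    have hreach := OM_reach_snoc (hreach3 i le_rfl) hq hb
    rw [if_pos hcase]
    refine OM_out (by simpa [List.append_assoc] using hreach) ?_
    rw [show List.replicate (aCSD n) true ++ false :: false :: List.replicate i true ++ [false]
        = List.replicate (aCSD n) true ++
            false :: (false :: (List.replicate i true ++ [false])) by simp]
    rw [stepFun_phase3_repF]
  · rw [if_neg hcase]
    refine OM_out (by simpa using hreach3 i le_rfl) ?_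
    rw [List.append_nil, stepFun_phase3_rep, nfind_aCSD, if_neg hcase]

end Runs

/-! ### Size bounds -/

lemma pair_le_sq (a b : ℕ) : Nat.pair a b ≤ (a + b + 1) ^ 2 := by
  rw [Nat.pair]
  split <;> nlinarith

lemma stepFun_replicate_le (s : ℕ) : stepFun (List.replicate s true) ≤ 2 * (s + 2) ^ 2 := by
  rw [stepFun_replicate]
  have := pair_le_sq (s + 1) 0
  nlinarith

lemma stepFun_canon_le (a : ℕ) (rest : List Bool) :
    stepFun (List.replicate a true ++ false :: rest) ≤
      2 * (a + pEval (nfind a) a + rest.length + 2) ^ 2 + 1 := by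
  rw [stepFun_canon]
  have h1 : rest.tail.length ≤ rest.length := by
    rw [List.length_tail]; omega
  have hidx : rest.tail.idxOf false ≤ rest.tail.length := List.idxOf_le_length
  have hp1 := pair_le_sq 0 (pEval (nfind a) a)
  have hp2 := pair_le_sq 0 (rest.tail.length + 1)
  set W := a + pEval (nfind a) a + rest.length + 2 with hW
  have hW1 : (0 + pEval (nfind a) a + 1) ^ 2 ≤ W ^ 2 := Nat.pow_le_pow_left (by omega) 2
  have hW2 : (0 + (rest.tail.length + 1) + 1) ^ 2 ≤ W ^ 2 := Nat.pow_le_pow_left (by omega) 2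
  have hW3 : W ≤ W ^ 2 := by nlinarith
  split
  · linarith
  · cases rest.headI
    · simp only [cond_false]
      split
      · split
        · linarith
        · linarith
      · linarith
    · simp only [cond_true]
      linarith

lemma size_canon_bound {n v : ℕ}
    (hv : v ≤ 2 * (aCSD n + 2 * pEval n (aCSD n) + 4) ^ 2 + 1) :
    Nat.size v ≤ 2 * (aCSD n * aCSD n) + 2 * aCSD n + 10 := by
  set a := aCSD n with ha
  have ha1 : 1 ≤ a := by have := aCSD_ge n; omega
  have hn : n ≤ a := by have := aCSD_ge n; omega
  have hP : pEval n a < 2 ^ (a * a + a) := pEval_lt_two_pow hn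
  rw [Nat.size_le]
  have h2 : a + 4 ≤ 2 ^ (a * a + a + 1) := by
    have hx : a + 1 ≤ 2 ^ a := succ_le_two_pow a
    have hy : 2 ^ (a + 2) ≤ 2 ^ (a * a + a + 1) :=
      Nat.pow_le_pow_right (by omega) (by nlinarith)
    have hz : 2 ^ (a + 2) = 4 * 2 ^ a := by ring
    omega
  have h3 : 2 * pEval n a < 2 ^ (a * a + a + 1) := by
    have : (2 : ℕ) ^ (a * a + a + 1) = 2 * 2 ^ (a * a + a) := by ring
    omega
  have h4 : a + 2 * pEval n a + 4 < 2 ^ (a * a + a + 2) := by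
    have : (2 : ℕ) ^ (a * a + a + 2) = 2 ^ (a * a + a + 1) + 2 ^ (a * a + a + 1) := by ring
    omega
  have h5 : (a + 2 * pEval n a + 4) ^ 2 < 2 ^ (2 * (a * a) + 2 * a + 4) := by
    have := Nat.pow_lt_pow_left h4 (n := 2) (by omega)
    calc (a + 2 * pEval n a + 4) ^ 2 < (2 ^ (a * a + a + 2)) ^ 2 := this
      _ = 2 ^ (2 * (a * a) + 2 * a + 4) := by rw [← pow_mul]; ring_nf
  have h6 : (2 : ℕ) ^ (2 * (a * a) + 2 * a + 5) = 2 * 2 ^ (2 * (a * a) + 2 * a + 4) := by ring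
  have h7 : (2 : ℕ) ^ (2 * (a * a) + 2 * a + 5) ≤ 2 ^ (2 * (a * a) + 2 * a + 10) :=
    Nat.pow_le_pow_right (by omega) (by omega)
  omega

lemma maxsize_canon_le (n : ℕ) (rest : List Bool)
    (hlen : rest.length ≤ pEval n (aCSD n) + 1) :
    maxsize (List.replicate (aCSD n) true ++ false :: rest) ≤
      2 * (aCSD n * aCSD n) + 2 * aCSD n + 10 := by
  apply maxsize_le
  intro k hk
  rw [take_canon]
  split
  · rename_i h
    apply size_canon_bound
    calc stepFun (List.replicate k true) ≤ 2 * (k + 2) ^ 2 := stepFun_replicate_le k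
      _ ≤ 2 * (aCSD n + 2 * pEval n (aCSD n) + 4) ^ 2 + 1 := by
          have : (k + 2) ^ 2 ≤ (aCSD n + 2 * pEval n (aCSD n) + 4) ^ 2 :=
            Nat.pow_le_pow_left (by omega) 2
          omega
  · rename_i h
    apply size_canon_bound
    have hc := stepFun_canon_le (aCSD n) (rest.take (k - (aCSD n + 1)))
    rw [nfind_aCSD] at hc
    have htl : (rest.take (k - (aCSD n + 1))).length ≤ pEval n (aCSD n) + 1 := by
      rw [List.length_take]
      omega
    calc stepFun _ ≤ 2 * (aCSD n + pEval n (aCSD n) +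
          (rest.take (k - (aCSD n + 1))).length + 2) ^ 2 + 1 := hc
      _ ≤ 2 * (aCSD n + 2 * pEval n (aCSD n) + 4) ^ 2 + 1 := by
          have : (aCSD n + pEval n (aCSD n) + (rest.take (k - (aCSD n + 1))).length + 2) ^ 2
              ≤ (aCSD n + 2 * pEval n (aCSD n) + 4) ^ 2 :=
            Nat.pow_le_pow_left (by omega) 2
          omega

/-! ### PRT[O]-learnability -/

lemma str_zero (f : ℕ → ℕ) : str f 0 = [] := rfl

theorem CSD_PRTO : PRTO CSD := by
  classical
  refine ⟨OM, Polynomial.C 20 + Polynomial.C 20 * Polynomial.X +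
    Polynomial.C 20 * Polynomial.X ^ 2, ?_⟩
  intro A hA f hf
  have heval : ∀ m : ℕ, (Polynomial.C 20 + Polynomial.C 20 * Polynomial.X +
      Polynomial.C 20 * Polynomial.X ^ 2).eval m = 20 + 20 * m + 20 * m ^ 2 := fun m => by
    simp
  obtain ⟨k, hk⟩ := hA
  rcases FCSD_classify k with hc | ⟨hb0, hb2, hc⟩
  · -- the target is `Aset n`
    have hAeq : A = Aset (maxfit k) := by rw [← hk]; exact hc
    subst hAeq
    set n := maxfit k with hn
    set a := aCSD n with ha
    refine ⟨a, FCSD_aCSD n, 0, fun m _ => ⟨_, out_Aset n (str f m)⟩,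
      List.replicate a true ++ [false, true],
      (str f 0).length + (List.replicate a true ++ [false, true]).length +
        maxsize (List.replicate a true ++ [false, true]),
      out_Aset n (str f 0), Part.mem_some _, ?_⟩
    have hlen : (List.replicate a true ++ [false, true]).length = a + 2 := by simp
    have hms : maxsize (List.replicate a true ++ [false, true]) ≤
        2 * (a * a) + 2 * a + 10 := by
      have := maxsize_canon_le n [true] (by simp)
      simpa using this
    rw [str_zero, heval]
    simp only [List.length_nil, hlen]
    rcases Nat.eq_zero_or_pos n with hn0 | hn1
    · have ha1 : a = 1 := by rw [ha, hn0, aCSD_zero]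
      rw [ha1] at hms ⊢
      omega
    · rw [CSD_mi_Aset (by omega)]
      have ha1 : 1 ≤ a := by have := aCSD_ge n; omega
      nlinarith
  · -- the target is `Bset n i`
    have hAeq : A = Bset (maxfit k) (k - aCSD (maxfit k)) := by rw [← hk]; exact hc
    subst hAeq
    set n := maxfit k with hn
    set i := k - aCSD (maxfit k) with hi
    set a := aCSD n with ha
    refine ⟨a + i, FCSD_Bset hb0 hb2, 0,
      fun m _ => ⟨_, out_Bset n i hb0 hb2 (str f m)⟩, _,
      (str f 0).length + (List.replicate a true ++ false :: false :: List.replicate i true ++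
        (if i + 1 < pEval n a then [false] else [])).length +
        maxsize (List.replicate a true ++ false :: false :: List.replicate i true ++
        (if i + 1 < pEval n a then [false] else [])),
      out_Bset n i hb0 hb2 (str f 0), Part.mem_some _, ?_⟩
    have hlen : (List.replicate a true ++ false :: false :: List.replicate i true ++
        (if i + 1 < pEval n a then [false] else [])).length ≤ a + i + 3 := by
      split <;> simp <;> omega
    have hms : maxsize (List.replicate a true ++ false :: false :: List.replicate i true ++
        (if i + 1 < pEval n a then [false] else [])) ≤ 2 * (a * a) + 2 * a + 10 := by
      have h1 : (false :: List.replicate i true ++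
          (if i + 1 < pEval n a then [false] else [])).length ≤ pEval n a + 1 := by
        split <;> simp <;> omega
      have := maxsize_canon_le n (false :: List.replicate i true ++
        (if i + 1 < pEval n a then [false] else [])) h1
      simpa [List.append_assoc] using this
    rw [str_zero, heval, CSD_mi_Bset hb0 hb2]
    simp only [List.length_nil]
    have ha1 : 1 ≤ a := by have := aCSD_ge n; omega
    nlinarith

/-! ### Tools for the negative direction -/

lemma eval_coeff_list (p : Polynomial ℕ) (x : ℕ) :
    pEval (Encodable.encode ((List.range (p.natDegree + 1)).map p.coeff)) x = p.eval x := by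
  rw [pEval_encode, foldr_horner_eq_sum, Polynomial.eval_eq_sum_range]
  rw [List.length_map, List.length_range]
  refine Finset.sum_congr rfl fun k hk => ?_
  rw [Finset.mem_range] at hk
  congr 1
  rw [List.getD_eq_getElem?_getD, List.getElem?_map, List.getElem?_range hk]
  rfl

lemma poly_eval_mono (p : Polynomial ℕ) {x y : ℕ} (h : x ≤ y) : p.eval x ≤ p.eval y := by
  rw [Polynomial.eval_eq_sum_range, Polynomial.eval_eq_sum_range]
  refine Finset.sum_le_sum fun k _ => ?_
  exact Nat.mul_le_mul_left _ (Nat.pow_le_pow_left h k)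

lemma str_take (f : ℕ → ℕ) {m m' : ℕ} (h : m ≤ m') : str f m = (str f m').take m := by
  rw [str, str, ← List.map_take, List.take_range, min_eq_left h]

lemma str_prefix (f : ℕ → ℕ) {m m' : ℕ} (h : m ≤ m') : str f m <+: str f m' := by
  rw [str_take f h]
  exact List.take_prefix _ _

lemma str_congr {f g : ℕ → ℕ} {m : ℕ} (h : ∀ j, j < m → f j = g j) : str f m = str g m := by
  unfold str
  apply List.map_congr_left
  intro j hj
  exact h j (List.mem_range.1 hj)

/-- A cyclic enumeration of a finite list. -/
def cyc (l : List ℕ) : ℕ → ℕ := fun m => l.getD (m % l.length) 0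

lemma isEnum_cyc {l : List ℕ} {S : Set ℕ} (hne : l ≠ [])
    (hS : ∀ x, x ∈ l ↔ x ∈ S) : IsEnum (cyc l) S := by
  have hlen : 0 < l.length := List.length_pos_iff.2 hne
  apply Set.eq_of_subset_of_subset
  · rintro x ⟨m, rfl⟩
    have hm : m % l.length < l.length := Nat.mod_lt _ hlen
    rw [cyc, List.getD_eq_getElem l 0 hm]
    exact (hS _).1 (l.getElem_mem hm)
  · intro x hx
    obtain ⟨k, hk, hkx⟩ := List.mem_iff_getElem.1 ((hS x).2 hx)
    refine ⟨k, ?_⟩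
    rw [cyc, Nat.mod_eq_of_lt hk, List.getD_eq_getElem l 0 hk, hkx]

/-- Follow `g` for `N` steps, then enumerate the content of `l` cyclically. -/
def mix (g : ℕ → ℕ) (N : ℕ) (l : List ℕ) : ℕ → ℕ :=
  fun m => if m < N then g m else cyc l (m - N)

lemma mix_eq_of_lt {g N l} {m : ℕ} (h : m < N) : mix g N l m = g m := if_pos h

lemma isEnum_mix {g : ℕ → ℕ} {S T : Set ℕ} {l : List ℕ} {N : ℕ}
    (hg : IsEnum g S) (hST : S ⊆ T) (hne : l ≠ []) (hl : ∀ x, x ∈ l ↔ x ∈ T) :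
    IsEnum (mix g N l) T := by
  have hcyc : IsEnum (cyc l) T := isEnum_cyc hne hl
  apply Set.eq_of_subset_of_subset
  · rintro x ⟨m, rfl⟩
    rw [mix]
    split
    · exact hST (hg ▸ ⟨m, rfl⟩)
    · exact hcyc ▸ ⟨m - N, rfl⟩
  · intro x hx
    obtain ⟨m, hm⟩ := show x ∈ Set.range (cyc l) from hcyc.symm ▸ hx
    refine ⟨N + m, ?_⟩
    rw [mix, if_neg (by omega), Nat.add_sub_cancel_left, hm]

def listA (n : ℕ) : List ℕ :=
  (List.range (pEval n (aCSD n) + 1)).flatMap fun v =>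
    (List.range ((if v = pEval n (aCSD n) then aCSD n else aCSD n + v) + 1)).map
      fun u => Nat.pair u v

lemma mem_listA {n x : ℕ} : x ∈ listA n ↔ x ∈ Aset n := by
  rw [listA, List.mem_flatMap]
  constructor
  · rintro ⟨v, hv, hx⟩
    rw [List.mem_range] at hv
    obtain ⟨u, hu, rfl⟩ := List.mem_map.1 hx
    rw [List.mem_range] at hu
    rw [pair_mem_Aset]
    split at hu
    · left; omega
    · right; omega
  · intro hx
    rw [mem_Aset] at hx
    refine ⟨x.unpair.2, List.mem_range.2 (by omega), List.mem_map.2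
      ⟨x.unpair.1, List.mem_range.2 ?_, Nat.pair_unpair x⟩⟩
    split <;> omega

lemma listA_ne_nil (n : ℕ) : listA n ≠ [] :=
  List.ne_nil_of_mem (mem_listA.2 (zero_mem_Aset n))

def listB (n i : ℕ) : List ℕ :=
  (List.range (i + 1)).flatMap fun v =>
    (List.range (aCSD n + v + 1)).map fun u => Nat.pair u v

lemma mem_listB {n i x : ℕ} : x ∈ listB n i ↔ x ∈ Bset n i := by
  rw [listB, List.mem_flatMap]
  constructor
  · rintro ⟨v, hv, hx⟩
    rw [List.mem_range] at hv
    obtain ⟨u, hu, rfl⟩ := List.mem_map.1 hx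
    rw [List.mem_range] at hu
    rw [pair_mem_Bset]
    omega
  · intro hx
    rw [mem_Bset] at hx
    exact ⟨x.unpair.2, List.mem_range.2 (by omega), List.mem_map.2
      ⟨x.unpair.1, List.mem_range.2 (by omega), Nat.pair_unpair x⟩⟩

lemma listB_ne_nil (n i : ℕ) : listB n i ≠ [] :=
  List.ne_nil_of_mem (mem_listB.2 (zero_mem_Bset n i))

lemma mono_bounded_stab : ∀ (B : ℕ) (u : ℕ → ℕ), Monotone u → (∀ m, u m ≤ B) →
    ∃ m₀, ∀ m, m₀ ≤ m → u m = u m₀ := by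
  intro B
  induction B with
  | zero =>
    intro u hm hb
    exact ⟨0, fun m _ => by have := hb m; have := hb 0; omega⟩
  | succ B ih =>
    intro u hm hb
    by_cases hex : ∃ m, u m = B + 1
    · obtain ⟨m, hmB⟩ := hex
      refine ⟨m, fun m' hm' => ?_⟩
      have := hm hm'
      have := hb m'
      omega
    · push_neg at hex
      refine ih u hm fun m => ?_
      have := hb m
      have := hex m
      omega

/-! ### Not PRT[T]-learnable -/

theorem CSD_not_PRTT : ¬ PRTT CSD := by
  rintro ⟨M, T, p, hL⟩
  -- the self-referential index: `p_n = p + 2`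
  set q : Polynomial ℕ := p + Polynomial.C 2 with hq
  set n : ℕ := Encodable.encode ((List.range (q.natDegree + 1)).map q.coeff) with hn
  have hpe : ∀ x, pEval n x = p.eval x + 2 := fun x => by
    rw [hn, eval_coeff_list, hq, Polynomial.eval_add, Polynomial.eval_C]
  set a := aCSD n with ha
  set P := pEval n a with hPdef
  have hP2 : P = p.eval a + 2 := hpe a
  set Q := p.eval (CSD.mi (Aset n)) with hQ
  have hQP : Q + 2 ≤ P := by
    have h1 : CSD.mi (Aset n) ≤ a := CSD_mi_Aset_le n
    have h2 := poly_eval_mono p h1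
    omega
  -- Key: the teacher output on any enumeration of any `Bset n i` stays short
  have key : ∀ i, 0 < i → i < P → ∀ g : ℕ → ℕ, IsEnum g (Bset n i) →
      ∀ h_B N₀, (∀ m, N₀ ≤ m → M.eval (T.t (str g m)) = Part.some h_B) →
      FCSD h_B = Bset n i →
      ∀ N, N₀ ≤ N → (T.t (str g N)).length < Q := by
    intro i hi0 hiP g hg h_B N₀ hset hFB N hN
    have hBA : Bset n i ⊆ Aset n := Bset_subset_Aset hiP
    set f := mix g N (listA n) with hf
    have hfA : IsEnum f (Aset n) :=
      isEnum_mix hg hBA (listA_ne_nil n) fun x => mem_listA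
    obtain ⟨h, hFh, n₀, hsett, t, htmem, htlt⟩ :=
      hL (Aset n) ⟨aCSD n, FCSD_aCSD n⟩ f hfA
    have hgf : str f N = str g N := str_congr fun j hj => mix_eq_of_lt hj
    by_cases hcase : N ≤ n₀
    · have hpre : T.t (str f N) <+: T.t (str f n₀) := T.mono (str_prefix f hcase)
      have hlen1 : (T.t (str f n₀)).length ≤ t := M.length_le_time htmem
      have hlen2 := hpre.length_le
      rw [hgf] at hpre hlen2
      omega
    · exfalso
      have h1 : M.eval (T.t (str f N)) = Part.some h := hsett N (by omega)
      rw [hgf] at h1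
      have h2 : M.eval (T.t (str g N)) = Part.some h_B := hset N hN
      have hhb : h = h_B := by
        rw [h1] at h2
        exact Part.some_inj.1 h2
      subst hhb
      have hFh' : FCSD h = Aset n := hFh
      rw [hFB] at hFh'
      exact Aset_ne_Bset hiP hFh'.symm
  -- stabilization of the teacher output on enumerations of `Bset n i`
  have stab : ∀ i, 0 < i → i < P → ∀ g : ℕ → ℕ, IsEnum g (Bset n i) →
      ∃ N₀ h_B, FCSD h_B = Bset n i ∧
        (∀ m, N₀ ≤ m → M.eval (T.t (str g m)) = Part.some h_B) ∧
        (∀ m, N₀ ≤ m → T.t (str g m) = T.t (str g N₀)) ∧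
        (T.t (str g N₀)).length < Q := by
    intro i hi0 hiP g hg
    obtain ⟨h_B, hFB, n₀, hsett, -⟩ :=
      hL (Bset n i) ⟨aCSD n + i, FCSD_Bset hi0 hiP⟩ g hg
    have hkey := key i hi0 hiP g hg h_B n₀ hsett hFB
    have hu_mono : Monotone fun m => (T.t (str g (n₀ + m))).length := by
      intro m m' hm
      exact (T.mono (str_prefix g (by omega))).length_le
    obtain ⟨m₀, hm₀⟩ := mono_bounded_stab Q _ hu_mono
      (fun m => le_of_lt (hkey (n₀ + m) (by omega)))
    refine ⟨n₀ + m₀, h_B, hFB, fun m hm => hsett m (by omega), ?_, hkey _ (by omega)⟩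
    intro m hm
    have hpre : T.t (str g (n₀ + m₀)) <+: T.t (str g m) := T.mono (str_prefix g hm)
    have hlen : (T.t (str g m)).length = (T.t (str g (n₀ + m₀))).length := by
      have := hm₀ (m - n₀) (by omega)
      rw [show n₀ + (m - n₀) = m by omega] at this
      exact this
    exact (hpre.eq_of_length hlen.symm).symm
  -- the increasing chain of stabilized teacher outputs
  have chain : ∀ i, 0 < i → i < P → ∃ (g : ℕ → ℕ) (N₀ h_B : ℕ),
      IsEnum g (Bset n i) ∧ FCSD h_B = Bset n i ∧
      (∀ m, N₀ ≤ m → M.eval (T.t (str g m)) = Part.some h_B) ∧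
      (∀ m, N₀ ≤ m → T.t (str g m) = T.t (str g N₀)) ∧
      (T.t (str g N₀)).length < Q ∧ i ≤ (T.t (str g N₀)).length + 1 := by
    intro i
    induction i with
    | zero => omega
    | succ i ih =>
      intro h0 hiP
      by_cases hi : i = 0
      · subst hi
        set g : ℕ → ℕ := cyc (listB n 1) with hg
        have hge : IsEnum g (Bset n 1) :=
          isEnum_cyc (listB_ne_nil n 1) fun x => mem_listB
        obtain ⟨N₀, h_B, hFB, hev, hst, hlen⟩ := stab 1 (by omega) hiP g hge
        exact ⟨g, N₀, h_B, hge, hFB, hev, hst, hlen, by omega⟩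
      · obtain ⟨g, N₀, h_B, hg, hFB, hev, hstab, hlen, hlb⟩ := ih (by omega) (by omega)
        set g' := mix g N₀ (listB n (i + 1)) with hg'
        have hge' : IsEnum g' (Bset n (i + 1)) :=
          isEnum_mix hg (Bset_mono (by omega)) (listB_ne_nil n (i + 1)) fun x => mem_listB
        obtain ⟨N₁, h_B', hFB', hev', hstab', hlen'⟩ := stab (i + 1) (by omega) hiP g' hge'
        have hagree : str g' N₀ = str g N₀ := str_congr fun j hj => mix_eq_of_lt hj
        have hpre : T.t (str g N₀) <+: T.t (str g' N₁) := by
          have h1 : T.t (str g' N₀) <+: T.t (str g' (max N₀ N₁)) :=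
            T.mono (str_prefix g' (le_max_left _ _))
          have h2 : T.t (str g' (max N₀ N₁)) = T.t (str g' N₁) :=
            hstab' _ (le_max_right _ _)
          rw [hagree, h2] at h1
          exact h1
        have hne : T.t (str g N₀) ≠ T.t (str g' N₁) := by
          intro hcontra
          have e1 : M.eval (T.t (str g N₀)) = Part.some h_B := hev N₀ le_rfl
          have e2 : M.eval (T.t (str g' N₁)) = Part.some h_B' := hev' N₁ le_rfl
          rw [hcontra] at e1
          rw [e1] at e2
          have : h_B = h_B' := Part.some_inj.1 e2
          subst this
          rw [hFB] at hFB'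
          have := (Bset_inj hFB').2
          omega
        have hlt : (T.t (str g N₀)).length < (T.t (str g' N₁)).length := by
          rcases Nat.lt_or_ge (T.t (str g N₀)).length (T.t (str g' N₁)).length with h | h
          · exact h
          · exact absurd (hpre.eq_of_length (le_antisymm hpre.length_le h)) hne
        exact ⟨g', N₁, h_B', hge', hFB', hev', hstab', hlen', by omega⟩
  -- contradiction
  have hPQ : 0 < P - 1 := by omega
  obtain ⟨g, N₀, h_B, -, -, -, -, hlen, hlb⟩ := chain (P - 1) hPQ (by omega)
  omega


/-- There is an indexed family `𝓒𝓢𝓓` (the column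
self-describing sets), with `F_{a_i} = A_i` and `F_{a_i + j} = B_{i,j}` for
`0 < j < p_i(a_i)`, which is PRT[O]-learnable but not PRT[T]-learnable. -/
theorem stmt4 :
    ∃ 𝓕 : IndexedFamily,
      (∀ i, 𝓕.F (aCSD i) = Aset i) ∧
      (∀ i j, 0 < j → j < pEval i (aCSD i) → 𝓕.F (aCSD i + j) = Bset i j) ∧
      PRTO 𝓕 ∧ ¬ PRTT 𝓕 := by
  exact ⟨CSD, FCSD_aCSD, fun i j h0 hP => FCSD_Bset h0 hP, CSD_PRTO, CSD_not_PRTT⟩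

end TeachLearn
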